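/- Assume all corner concentration values of all cells are strictly positive, all values D₁₁^∓ lie in [0, D₁₁^M], all values |D₁₂^∓| are at most D₁₂^M, α̃ ≥ (Δy/(2Δx))·D₁₁^M + √3·D₁₂^M, and D₁₁^M·Λ₁ + 2(α̃ + D₁₂^M)·λ < Φ_m/12, where Φ_m is the minimum of Φ over all mesh corners. Then the x-diffusion part H^d_x := r̄_{ij}/6 − λ₁·∑_{β=1,2} w_β[ {D₁₁c_x + D₁₂c_y}_{i−1/2,j,β} + (α̃/Δy)·[c]_{i−1/2,j,β} − {D₁₁c_x + D₁₂c_y}_{i+1/2,j,β} − (α̃/Δy)·[c]_{i+1/2,j,β} ] is strictly positive for every interior cell (2 ≤ i ≤ N_x−1, 2 ≤ j ≤ N_y−1). -/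

import Mathlib

noncomputable section

namespace DG2D

/-- Gauss constant `μ₁ = (3+√3)/6`. -/
def mu1 : ℝ := (3 + Real.sqrt 3) / 6

/-- Gauss constant `μ₂ = (3-√3)/6`. -/
def mu2 : ℝ := (3 - Real.sqrt 3) / 6

/-- Value at the Gauss point `β` of an edge, from the two endpoint (corner) values:
`β = 1` gives `μ₁·a + μ₂·b`, `β = 2` gives `μ₂·a + μ₁·b`. -/
def ga (β : Fin 2) (a b : ℝ) : ℝ := if β = 0 then mu1 * a + mu2 * b else mu2 * a + mu1 * b

/-- Cell average `r̄_{ij} = (1/4)·∑ cΦ` over the four corners of `K_{ij}`.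
`Φ i j` denotes the corner value `Φ_{i+1/2,j+1/2}`; `c00 i j`, `c10 i j`, `c01 i j`,
`c11 i j` denote the corner values of `c` in cell `K_{ij}` at the corners
`(i-1/2,j-1/2)`, `(i+1/2,j-1/2)`, `(i-1/2,j+1/2)`, `(i+1/2,j+1/2)` respectively. -/
def rbar (Φ c00 c10 c01 c11 : ℕ → ℕ → ℝ) (i j : ℕ) : ℝ :=
  (c00 i j * Φ (i - 1) (j - 1) + c10 i j * Φ i (j - 1)
    + c01 i j * Φ (i - 1) j + c11 i j * Φ i j) / 4

/-- Trace `c⁻` (from `K_{ij}`) at Gauss point `β` of the vertical edge `x_{i+1/2}`, row `j`. -/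
def cmV (c10 c11 : ℕ → ℕ → ℝ) (i j : ℕ) (β : Fin 2) : ℝ := ga β (c10 i j) (c11 i j)

/-- Trace `c⁺` (from `K_{i+1,j}`) at Gauss point `β` of the vertical edge `x_{i+1/2}`, row `j`. -/
def cpV (c00 c01 : ℕ → ℕ → ℝ) (i j : ℕ) (β : Fin 2) : ℝ := ga β (c00 (i + 1) j) (c01 (i + 1) j)

/-- Trace `c⁻` (from `K_{ij}`) at Gauss point `β` of the horizontal edge `y_{j+1/2}`, column `i`. -/
def cmH (c01 c11 : ℕ → ℕ → ℝ) (i j : ℕ) (β : Fin 2) : ℝ := ga β (c01 i j) (c11 i j)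

/-- Trace `c⁺` (from `K_{i,j+1}`) at Gauss point `β` of the horizontal edge `y_{j+1/2}`. -/
def cpH (c00 c10 : ℕ → ℕ → ℝ) (i j : ℕ) (β : Fin 2) : ℝ := ga β (c00 i (j + 1)) (c10 i (j + 1))

/-- Jump `[c] = c⁺ - c⁻` at a vertical-edge Gauss point. -/
def jumpV (c00 c10 c01 c11 : ℕ → ℕ → ℝ) (i j : ℕ) (β : Fin 2) : ℝ :=
  cpV c00 c01 i j β - cmV c10 c11 i j β

/-- Jump `[c] = c⁺ - c⁻` at a horizontal-edge Gauss point. -/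
def jumpH (c00 c10 c01 c11 : ℕ → ℕ → ℝ) (i j : ℕ) (β : Fin 2) : ℝ :=
  cpH c00 c10 i j β - cmH c01 c11 i j β

/-- Convective flux `û₁c = u₁⁺·c⁺ - α·[c]` at vertical-edge Gauss points. -/
def uc1 (u1 : ℕ → ℕ → Fin 2 → ℝ) (c00 c10 c01 c11 : ℕ → ℕ → ℝ) (α : ℝ)
    (i j : ℕ) (β : Fin 2) : ℝ :=
  u1 i j β * cpV c00 c01 i j β - α * (cpV c00 c01 i j β - cmV c10 c11 i j β)

/-- Convective flux `û₂c = u₂⁺·c⁺ - α·[c]` at horizontal-edge Gauss points. -/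
def uc2 (u2 : ℕ → ℕ → Fin 2 → ℝ) (c00 c10 c01 c11 : ℕ → ℕ → ℝ) (α : ℝ)
    (i j : ℕ) (β : Fin 2) : ℝ :=
  u2 i j β * cpH c00 c10 i j β - α * (cpH c00 c10 i j β - cmH c01 c11 i j β)

/-- Convection part `H^c_{ij}`. -/
def Hc (u1 u2 : ℕ → ℕ → Fin 2 → ℝ) (Φ c00 c10 c01 c11 : ℕ → ℕ → ℝ) (α Δx Δy Δt : ℝ)
    (i j : ℕ) : ℝ :=
  rbar Φ c00 c10 c01 c11 i j / 3
    + (Δt / Δx) * ∑ β : Fin 2, (1 / 2 : ℝ) *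
        (uc1 u1 c00 c10 c01 c11 α (i - 1) j β - uc1 u1 c00 c10 c01 c11 α i j β)
    + (Δt / Δy) * ∑ β : Fin 2, (1 / 2 : ℝ) *
        (uc2 u2 c00 c10 c01 c11 α i (j - 1) β - uc2 u2 c00 c10 c01 c11 α i j β)

/-- Derivative trace `(c_x)⁻` at a vertical-edge Gauss point:
`(c_x)⁻_{i+1/2,β} = (c⁻_{i+1/2,β} - c⁺_{i-1/2,β})/Δx`. -/
def cxmV (c00 c10 c01 c11 : ℕ → ℕ → ℝ) (Δx : ℝ) (i j : ℕ) (β : Fin 2) : ℝ :=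
  (cmV c10 c11 i j β - cpV c00 c01 (i - 1) j β) / Δx

/-- Derivative trace `(c_x)⁺` at a vertical-edge Gauss point:
`(c_x)⁺_{i+1/2,β} = (c⁻_{i+3/2,β} - c⁺_{i+1/2,β})/Δx`. -/
def cxpV (c00 c10 c01 c11 : ℕ → ℕ → ℝ) (Δx : ℝ) (i j : ℕ) (β : Fin 2) : ℝ :=
  (cmV c10 c11 (i + 1) j β - cpV c00 c01 i j β) / Δx

/-- Tangential derivative trace `(c_y)⁻` on a vertical edge:
`(√3/Δy)·(c⁻_{i+1/2,2} - c⁻_{i+1/2,1})` (the same for both Gauss points). -/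
def cymV (c10 c11 : ℕ → ℕ → ℝ) (Δy : ℝ) (i j : ℕ) : ℝ :=
  (Real.sqrt 3 / Δy) * (cmV c10 c11 i j 1 - cmV c10 c11 i j 0)

/-- Tangential derivative trace `(c_y)⁺` on a vertical edge. -/
def cypV (c00 c01 : ℕ → ℕ → ℝ) (Δy : ℝ) (i j : ℕ) : ℝ :=
  (Real.sqrt 3 / Δy) * (cpV c00 c01 i j 1 - cpV c00 c01 i j 0)

/-- Average `{D₁₁c_x + D₁₂c_y}` at a vertical-edge Gauss point. -/
def GxV (D11m D11p D12m D12p : ℕ → ℕ → Fin 2 → ℝ) (c00 c10 c01 c11 : ℕ → ℕ → ℝ)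
    (Δx Δy : ℝ) (i j : ℕ) (β : Fin 2) : ℝ :=
  (D11m i j β * cxmV c00 c10 c01 c11 Δx i j β + D12m i j β * cymV c10 c11 Δy i j
    + D11p i j β * cxpV c00 c10 c01 c11 Δx i j β + D12p i j β * cypV c00 c01 Δy i j) / 2

/-- x-diffusion part `H^d_x`. -/
def Hdx (D11m D11p D12m D12p : ℕ → ℕ → Fin 2 → ℝ) (Φ c00 c10 c01 c11 : ℕ → ℕ → ℝ)
    (αt Δx Δy Δt : ℝ) (i j : ℕ) : ℝ :=
  rbar Φ c00 c10 c01 c11 i j / 6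
    - (Δt / Δx) * ∑ β : Fin 2, (1 / 2 : ℝ) *
        ((GxV D11m D11p D12m D12p c00 c10 c01 c11 Δx Δy (i - 1) j β
            + (αt / Δy) * jumpV c00 c10 c01 c11 (i - 1) j β)
          - (GxV D11m D11p D12m D12p c00 c10 c01 c11 Δx Δy i j β
            + (αt / Δy) * jumpV c00 c10 c01 c11 i j β))

/-- Derivative trace `(c_y)⁻` at a horizontal-edge Gauss point. -/
def cymH (c00 c10 c01 c11 : ℕ → ℕ → ℝ) (Δy : ℝ) (i j : ℕ) (β : Fin 2) : ℝ :=
  (cmH c01 c11 i j β - cpH c00 c10 i (j - 1) β) / Δy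

/-- Derivative trace `(c_y)⁺` at a horizontal-edge Gauss point. -/
def cypH (c00 c10 c01 c11 : ℕ → ℕ → ℝ) (Δy : ℝ) (i j : ℕ) (β : Fin 2) : ℝ :=
  (cmH c01 c11 i (j + 1) β - cpH c00 c10 i j β) / Δy

/-- Tangential derivative trace `(c_x)⁻` on a horizontal edge. -/
def cxmH (c01 c11 : ℕ → ℕ → ℝ) (Δx : ℝ) (i j : ℕ) : ℝ :=
  (Real.sqrt 3 / Δx) * (cmH c01 c11 i j 1 - cmH c01 c11 i j 0)

/-- Tangential derivative trace `(c_x)⁺` on a horizontal edge. -/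
def cxpH (c00 c10 : ℕ → ℕ → ℝ) (Δx : ℝ) (i j : ℕ) : ℝ :=
  (Real.sqrt 3 / Δx) * (cpH c00 c10 i j 1 - cpH c00 c10 i j 0)

/-- Average `{D₂₁c_x + D₂₂c_y}` at a horizontal-edge Gauss point. -/
def GyH (D21m D21p D22m D22p : ℕ → ℕ → Fin 2 → ℝ) (c00 c10 c01 c11 : ℕ → ℕ → ℝ)
    (Δx Δy : ℝ) (i j : ℕ) (β : Fin 2) : ℝ :=
  (D21m i j β * cxmH c01 c11 Δx i j + D22m i j β * cymH c00 c10 c01 c11 Δy i j β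
    + D21p i j β * cxpH c00 c10 Δx i j + D22p i j β * cypH c00 c10 c01 c11 Δy i j β) / 2

/-- y-diffusion part `H^d_y`. -/
def Hdy (D21m D21p D22m D22p : ℕ → ℕ → Fin 2 → ℝ) (Φ c00 c10 c01 c11 : ℕ → ℕ → ℝ)
    (αt Δx Δy Δt : ℝ) (i j : ℕ) : ℝ :=
  rbar Φ c00 c10 c01 c11 i j / 6
    - (Δt / Δy) * ∑ β : Fin 2, (1 / 2 : ℝ) *
        ((GyH D21m D21p D22m D22p c00 c10 c01 c11 Δx Δy i (j - 1) β
            + (αt / Δx) * jumpH c00 c10 c01 c11 i (j - 1) β)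
          - (GyH D21m D21p D22m D22p c00 c10 c01 c11 Δx Δy i j β
            + (αt / Δx) * jumpH c00 c10 c01 c11 i j β))

/-- Value of the bilinear function `c` at the interior Gauss point `(β,γ)` of cell `K_{ij}`. -/
def cGP (c00 c10 c01 c11 : ℕ → ℕ → ℝ) (i j : ℕ) (β γ : Fin 2) : ℝ :=
  ga β (ga γ (c00 i j) (c01 i j)) (ga γ (c10 i j) (c11 i j))

/-- Value of the bilinear function `r = cΦ` at the interior Gauss point `(β,γ)` of `K_{ij}`. -/
def rGP (Φ c00 c10 c01 c11 : ℕ → ℕ → ℝ) (i j : ℕ) (β γ : Fin 2) : ℝ :=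
  ga β (ga γ (c00 i j * Φ (i - 1) (j - 1)) (c01 i j * Φ (i - 1) j))
    (ga γ (c10 i j * Φ i (j - 1)) (c11 i j * Φ i j))

/-- Value of the bilinear interpolant of `Φ` at the interior Gauss point `(β,γ)` of `K_{ij}`. -/
def phiGP (Φ : ℕ → ℕ → ℝ) (i j : ℕ) (β γ : Fin 2) : ℝ :=
  ga β (ga γ (Φ (i - 1) (j - 1)) (Φ (i - 1) j)) (ga γ (Φ i (j - 1)) (Φ i j))

/-- Source part `H^s_{ij}`. -/
def Hs (Φ c00 c10 c01 c11 : ℕ → ℕ → ℝ) (q ct P : ℕ → ℕ → Fin 2 → Fin 2 → ℝ)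
    (z1 Δt : ℝ) (i j : ℕ) : ℝ :=
  rbar Φ c00 c10 c01 c11 i j / 3
    + Δt * ∑ β : Fin 2, ∑ γ : Fin 2, (1 / 2 : ℝ) * (1 / 2 : ℝ) *
        (ct i j β γ * q i j β γ - z1 * rGP Φ c00 c10 c01 c11 i j β γ * P i j β γ)

/-- The Euler-forward cell-average update `r̄^{new}_{ij} = H^c + H^d_x + H^d_y + H^s`. -/
def rbarnew (u1 u2 D11m D11p D12m D12p D21m D21p D22m D22p : ℕ → ℕ → Fin 2 → ℝ)
    (Φ c00 c10 c01 c11 : ℕ → ℕ → ℝ) (q ct P : ℕ → ℕ → Fin 2 → Fin 2 → ℝ)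
    (α αt z1 Δx Δy Δt : ℝ) (i j : ℕ) : ℝ :=
  Hc u1 u2 Φ c00 c10 c01 c11 α Δx Δy Δt i j
    + Hdx D11m D11p D12m D12p Φ c00 c10 c01 c11 αt Δx Δy Δt i j
    + Hdy D21m D21p D22m D22p Φ c00 c10 c01 c11 αt Δx Δy Δt i j
    + Hs Φ c00 c10 c01 c11 q ct P z1 Δt i j


/-! ### Auxiliary lemmas for the proof of Lemma 3.6 (x-part) -/

lemma sqrt3_le_two : Real.sqrt 3 ≤ 2 := by
  nlinarith [Real.sq_sqrt (by norm_num : (0:ℝ) ≤ 3), Real.sqrt_nonneg 3]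

lemma mu1_pos : 0 < mu1 := by
  have := Real.sqrt_nonneg 3; unfold mu1; linarith

lemma mu2_pos : 0 < mu2 := by
  have := sqrt3_le_two; unfold mu2; linarith

lemma ga_pos (β : Fin 2) {a b : ℝ} (ha : 0 < a) (hb : 0 < b) : 0 < ga β a b := by
  unfold ga
  split
  · exact add_pos (mul_pos mu1_pos ha) (mul_pos mu2_pos hb)
  · exact add_pos (mul_pos mu2_pos ha) (mul_pos mu1_pos hb)

lemma ga_zero (a b : ℝ) : ga 0 a b = mu1 * a + mu2 * b := by simp [ga]

lemma ga_one (a b : ℝ) : ga 1 a b = mu2 * a + mu1 * b := by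
  simp [ga, Fin.ext_iff]

set_option maxHeartbeats 1000000 in
/-- The core algebraic estimate for the x-diffusion flux sum. -/
lemma flux_bound (u v αt D11M D12M s3 : ℝ)
    (hu : 0 < u) (hv : 0 < v) (hs0 : 0 ≤ s3) (hαt0 : 0 < αt)
    (hD11M : 0 ≤ D11M) (hD12M : 0 ≤ D12M)
    (hαt' : D11M * u / 2 + s3 * D12M * v ≤ αt * v)
    (a0 a1 b0 b1 c0 c1 d0 d1 A0 A1 B0 B1 C0 C1 E0 E1 : ℝ)
    (q0 q1 l0 l1 p0 p1 n0 n1 r0 r1 w0 w1 : ℝ)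
    (hq0 : 0 < q0) (hq1 : 0 < q1) (hl0 : 0 < l0) (hl1 : 0 < l1)
    (hp0 : 0 < p0) (hp1 : 0 < p1) (hn0 : 0 < n0) (hn1 : 0 < n1)
    (hr0 : 0 < r0) (hr1 : 0 < r1) (hw0 : 0 < w0) (hw1 : 0 < w1)
    (ha0 : 0 ≤ a0 ∧ a0 ≤ D11M) (ha1 : 0 ≤ a1 ∧ a1 ≤ D11M)
    (hb0 : 0 ≤ b0 ∧ b0 ≤ D11M) (hb1 : 0 ≤ b1 ∧ b1 ≤ D11M)
    (hA0 : 0 ≤ A0 ∧ A0 ≤ D11M) (hA1 : 0 ≤ A1 ∧ A1 ≤ D11M)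
    (hB0 : 0 ≤ B0 ∧ B0 ≤ D11M) (hB1 : 0 ≤ B1 ∧ B1 ≤ D11M)
    (hc0 : |c0| ≤ D12M) (hc1 : |c1| ≤ D12M)
    (hd0 : |d0| ≤ D12M) (hd1 : |d1| ≤ D12M)
    (hC0 : |C0| ≤ D12M) (hC1 : |C1| ≤ D12M)
    (hE0 : |E0| ≤ D12M) (hE1 : |E1| ≤ D12M) :
    u/4*(a0*(l0-q0) + a1*(l1-q1)) + s3*v/4*((c0+c1)*(l1-l0))
      + u/4*(b0*(n0-p0) + b1*(n1-p1)) + s3*v/4*((d0+d1)*(p1-p0))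
      + αt*v/2*((p0+p1) - (l0+l1))
      - (u/4*(A0*(n0-p0) + A1*(n1-p1)) + s3*v/4*((C0+C1)*(n1-n0))
        + u/4*(B0*(w0-r0) + B1*(w1-r1)) + s3*v/4*((E0+E1)*(r1-r0))
        + αt*v/2*((r0+r1) - (n0+n1)))
      ≤ (D11M*u/4 + (s3*D12M + αt)*v/2) * (p0+p1+n0+n1) := by
  rw [abs_le] at hc0 hc1 hd0 hd1 hC0 hC1 hE0 hE1
  have hsv : 0 ≤ s3 * v := mul_nonneg hs0 hv.le
  -- group A : left edge, minus-side trace terms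
  have k0 : a0*u/4 - (c0+c1)*(s3*v)/4 - αt*v/2 ≤ 0 := by
    have h1 : a0*u ≤ D11M*u := mul_le_mul_of_nonneg_right ha0.2 hu.le
    have h2 : -(c0+c1) * (s3*v) ≤ (2*D12M) * (s3*v) :=
      mul_le_mul_of_nonneg_right (by linarith [hc0.1, hc1.1]) hsv
    linarith [hαt']
  have k1 : a1*u/4 + (c0+c1)*(s3*v)/4 - αt*v/2 ≤ 0 := by
    have h1 : a1*u ≤ D11M*u := mul_le_mul_of_nonneg_right ha1.2 hu.le
    have h2 : (c0+c1) * (s3*v) ≤ (2*D12M) * (s3*v) :=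
      mul_le_mul_of_nonneg_right (by linarith [hc0.2, hc1.2]) hsv
    linarith [hαt']
  have hA : u/4*(a0*(l0-q0) + a1*(l1-q1)) + s3*v/4*((c0+c1)*(l1-l0))
      - αt*v/2*(l0+l1) ≤ 0 := by
    have t0 : l0 * (a0*u/4 - (c0+c1)*(s3*v)/4 - αt*v/2) ≤ l0 * 0 :=
      mul_le_mul_of_nonneg_left k0 hl0.le
    have t1 : l1 * (a1*u/4 + (c0+c1)*(s3*v)/4 - αt*v/2) ≤ l1 * 0 :=
      mul_le_mul_of_nonneg_left k1 hl1.le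
    have t2 : 0 ≤ u * (a0*q0) := mul_nonneg hu.le (mul_nonneg ha0.1 hq0.le)
    have t3 : 0 ≤ u * (a1*q1) := mul_nonneg hu.le (mul_nonneg ha1.1 hq1.le)
    linarith [t0, t1, t2, t3]
  -- group D : right edge, plus-side trace terms
  have kr0 : B0*u/4 + (E0+E1)*(s3*v)/4 - αt*v/2 ≤ 0 := by
    have h1 : B0*u ≤ D11M*u := mul_le_mul_of_nonneg_right hB0.2 hu.le
    have h2 : (E0+E1) * (s3*v) ≤ (2*D12M) * (s3*v) :=
      mul_le_mul_of_nonneg_right (by linarith [hE0.2, hE1.2]) hsv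
    linarith [hαt']
  have kr1 : B1*u/4 - (E0+E1)*(s3*v)/4 - αt*v/2 ≤ 0 := by
    have h1 : B1*u ≤ D11M*u := mul_le_mul_of_nonneg_right hB1.2 hu.le
    have h2 : -(E0+E1) * (s3*v) ≤ (2*D12M) * (s3*v) :=
      mul_le_mul_of_nonneg_right (by linarith [hE0.1, hE1.1]) hsv
    linarith [hαt']
  have hD : -(u/4*(B0*(w0-r0) + B1*(w1-r1)) + s3*v/4*((E0+E1)*(r1-r0))
      + αt*v/2*(r0+r1)) ≤ 0 := by
    have t0 : r0 * (B0*u/4 + (E0+E1)*(s3*v)/4 - αt*v/2) ≤ r0 * 0 :=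
      mul_le_mul_of_nonneg_left kr0 hr0.le
    have t1 : r1 * (B1*u/4 - (E0+E1)*(s3*v)/4 - αt*v/2) ≤ r1 * 0 :=
      mul_le_mul_of_nonneg_left kr1 hr1.le
    have t2 : 0 ≤ u * (B0*w0) := mul_nonneg hu.le (mul_nonneg hB0.1 hw0.le)
    have t3 : 0 ≤ u * (B1*w1) := mul_nonneg hu.le (mul_nonneg hB1.1 hw1.le)
    linarith [t0, t1, t2, t3]
  -- group B : left edge, plus-side trace terms
  have hB : u/4*(b0*(n0-p0) + b1*(n1-p1)) + s3*v/4*((d0+d1)*(p1-p0))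
      + αt*v/2*(p0+p1)
      ≤ D11M*u/4*(n0+n1) + s3*D12M*v/2*(p0+p1) + αt*v/2*(p0+p1) := by
    have e0 : b0*(n0-p0) ≤ D11M*n0 := by
      linarith [mul_le_mul_of_nonneg_right hb0.2 hn0.le, mul_nonneg hb0.1 hp0.le]
    have e1 : b1*(n1-p1) ≤ D11M*n1 := by
      linarith [mul_le_mul_of_nonneg_right hb1.2 hn1.le, mul_nonneg hb1.1 hp1.le]
    have e2 : (d0+d1)*(p1-p0) ≤ 2*D12M*(p0+p1) := by
      linarith [mul_nonneg (show (0:ℝ) ≤ 2*D12M - (d0+d1) by linarith [hd0.2, hd1.2])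
          (show (0:ℝ) ≤ (p0+p1) + (p1-p0) by linarith),
        mul_nonneg (show (0:ℝ) ≤ 2*D12M + (d0+d1) by linarith [hd0.1, hd1.1])
          (show (0:ℝ) ≤ (p0+p1) - (p1-p0) by linarith)]
    have e0' : u/4*(b0*(n0-p0) + b1*(n1-p1)) ≤ u/4*(D11M*n0 + D11M*n1) :=
      mul_le_mul_of_nonneg_left (by linarith) (by positivity)
    have e2' : s3*v/4*((d0+d1)*(p1-p0)) ≤ s3*v/4*(2*D12M*(p0+p1)) :=
      mul_le_mul_of_nonneg_left e2 (by positivity)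
    linarith [e0', e2']
  -- group C : right edge, minus-side trace terms
  have hC : -(u/4*(A0*(n0-p0) + A1*(n1-p1)) + s3*v/4*((C0+C1)*(n1-n0)))
      + αt*v/2*(n0+n1)
      ≤ D11M*u/4*(p0+p1) + s3*D12M*v/2*(n0+n1) + αt*v/2*(n0+n1) := by
    have e0 : -(A0*(n0-p0)) ≤ D11M*p0 := by
      linarith [mul_le_mul_of_nonneg_right hA0.2 hp0.le, mul_nonneg hA0.1 hn0.le]
    have e1 : -(A1*(n1-p1)) ≤ D11M*p1 := by
      linarith [mul_le_mul_of_nonneg_right hA1.2 hp1.le, mul_nonneg hA1.1 hn1.le]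
    have e2 : -((C0+C1)*(n1-n0)) ≤ 2*D12M*(n0+n1) := by
      linarith [mul_nonneg (show (0:ℝ) ≤ 2*D12M - (C0+C1) by linarith [hC0.2, hC1.2])
          (show (0:ℝ) ≤ (n0+n1) - (n1-n0) by linarith),
        mul_nonneg (show (0:ℝ) ≤ 2*D12M + (C0+C1) by linarith [hC0.1, hC1.1])
          (show (0:ℝ) ≤ (n0+n1) + (n1-n0) by linarith)]
    have e0' : u/4*(-(A0*(n0-p0)) + -(A1*(n1-p1))) ≤ u/4*(D11M*p0 + D11M*p1) :=
      mul_le_mul_of_nonneg_left (by linarith) (by positivity)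
    have e2' : s3*v/4*(-((C0+C1)*(n1-n0))) ≤ s3*v/4*(2*D12M*(n0+n1)) :=
      mul_le_mul_of_nonneg_left e2 (by positivity)
    linarith [e0', e2']
  linarith [hA, hB, hC, hD]

set_option maxHeartbeats 1000000 in
/-- Lemma 3.6, x-part (2D): positivity of the x-diffusion part `H^d_x` for interior cells. -/
theorem x_diffusion_part_positive_2d
    (Nx Ny : ℕ) (hNx : 4 ≤ Nx) (hNy : 4 ≤ Ny) (Δx Δy Δt : ℝ)
    (hΔx : 0 < Δx) (hΔy : 0 < Δy) (hΔt : 0 < Δt)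
    (Φ c00 c10 c01 c11 : ℕ → ℕ → ℝ) (D11m D11p D12m D12p : ℕ → ℕ → Fin 2 → ℝ)
    (αt D11M D12M : ℝ)
    (hΦ : ∀ i j, i ≤ Nx → j ≤ Ny → 0 < Φ i j)
    -- all corner concentration values of all cells strictly positive
    (hc : ∀ i j, 1 ≤ i → i ≤ Nx → 1 ≤ j → j ≤ Ny →
      0 < c00 i j ∧ 0 < c10 i j ∧ 0 < c01 i j ∧ 0 < c11 i j)
    -- all D₁₁ values lie in [0, D₁₁^M], all |D₁₂| values are at most D₁₂^M
    (hD11 : ∀ i j, 1 ≤ i → i ≤ Nx - 1 → 1 ≤ j → j ≤ Ny → ∀ β : Fin 2,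
      (0 ≤ D11m i j β ∧ D11m i j β ≤ D11M) ∧ (0 ≤ D11p i j β ∧ D11p i j β ≤ D11M))
    (hD12 : ∀ i j, 1 ≤ i → i ≤ Nx - 1 → 1 ≤ j → j ≤ Ny → ∀ β : Fin 2,
      |D12m i j β| ≤ D12M ∧ |D12p i j β| ≤ D12M)
    -- α̃ > 0 and α̃ ≥ (Δy/(2Δx))·D₁₁^M + √3·D₁₂^M
    (hαt0 : 0 < αt)
    (hαt : (Δy / (2 * Δx)) * D11M + Real.sqrt 3 * D12M ≤ αt)
    -- D₁₁^M·Λ₁ + 2(α̃ + D₁₂^M)·λ < Φ_m/12, Φ_m the minimum of Φ over all mesh corners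
    (hCFL : ∀ i j, i ≤ Nx → j ≤ Ny →
      D11M * (Δt / Δx ^ 2) + 2 * (αt + D12M) * (Δt / (Δx * Δy)) < Φ i j / 12) :
    ∀ i j, 2 ≤ i → i ≤ Nx - 1 → 2 ≤ j → j ≤ Ny - 1 →
      0 < Hdx D11m D11p D12m D12p Φ c00 c10 c01 c11 αt Δx Δy Δt i j := by
  intro i j hi2 hi1 hj2 hj1
  have hiNx : i ≤ Nx := by omega
  have hjNy : j ≤ Ny := by omega
  have hidx : i - 1 + 1 = i := by omega
  have hidx2 : i - 1 - 1 + 1 = i - 1 := by omega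
  -- corner positivity of the three cells involved
  have hcM := hc (i-1) j (by omega) (by omega) (by omega) hjNy
  have hcI := hc i j (by omega) hiNx (by omega) hjNy
  have hcP := hc (i+1) j (by omega) (by omega) (by omega) hjNy
  -- diffusion coefficient bounds at the two edges involved
  have hDL11 := fun β => hD11 (i-1) j (by omega) (by omega) (by omega) hjNy β
  have hDR11 := fun β => hD11 i j (by omega) hi1 (by omega) hjNy β
  have hDL12 := fun β => hD12 (i-1) j (by omega) (by omega) (by omega) hjNy β
  have hDR12 := fun β => hD12 i j (by omega) hi1 (by omega) hjNy β
  have hD11M0 : 0 ≤ D11M := le_trans (hDR11 0).1.1 (hDR11 0).1.2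
  have hD12M0 : 0 ≤ D12M := le_trans (abs_nonneg _) (hDR12 0).1
  -- positivity of all trace values
  have hq0 : 0 < cpV c00 c01 (i-1-1) j 0 := by
    simp only [cpV, hidx2]; exact ga_pos _ hcM.1 hcM.2.2.1
  have hq1 : 0 < cpV c00 c01 (i-1-1) j 1 := by
    simp only [cpV, hidx2]; exact ga_pos _ hcM.1 hcM.2.2.1
  have hl0 : 0 < cmV c10 c11 (i-1) j 0 := ga_pos _ hcM.2.1 hcM.2.2.2
  have hl1 : 0 < cmV c10 c11 (i-1) j 1 := ga_pos _ hcM.2.1 hcM.2.2.2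
  have hp0 : 0 < cpV c00 c01 (i-1) j 0 := by
    simp only [cpV, hidx]; exact ga_pos _ hcI.1 hcI.2.2.1
  have hp1 : 0 < cpV c00 c01 (i-1) j 1 := by
    simp only [cpV, hidx]; exact ga_pos _ hcI.1 hcI.2.2.1
  have hn0 : 0 < cmV c10 c11 i j 0 := ga_pos _ hcI.2.1 hcI.2.2.2
  have hn1 : 0 < cmV c10 c11 i j 1 := ga_pos _ hcI.2.1 hcI.2.2.2
  have hr0 : 0 < cpV c00 c01 i j 0 := ga_pos _ hcP.1 hcP.2.2.1
  have hr1 : 0 < cpV c00 c01 i j 1 := ga_pos _ hcP.1 hcP.2.2.1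
  have hw0 : 0 < cmV c10 c11 (i+1) j 0 := ga_pos _ hcP.2.1 hcP.2.2.2
  have hw1 : 0 < cmV c10 c11 (i+1) j 1 := ga_pos _ hcP.2.1 hcP.2.2.2
  -- the multiplied form of the penalty assumption
  have hαt' : D11M * Δx⁻¹ / 2 + Real.sqrt 3 * D12M * Δy⁻¹ ≤ αt * Δy⁻¹ := by
    have h := mul_le_mul_of_nonneg_right hαt (by positivity : (0:ℝ) ≤ Δy⁻¹)
    have he : (Δy / (2*Δx) * D11M + Real.sqrt 3 * D12M) * Δy⁻¹
        = D11M * Δx⁻¹ / 2 + Real.sqrt 3 * D12M * Δy⁻¹ := by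
      field_simp
    linarith [he ▸ h]
  -- the key flux bound
  have hSle : (∑ β : Fin 2, (1 / 2 : ℝ) *
        ((GxV D11m D11p D12m D12p c00 c10 c01 c11 Δx Δy (i - 1) j β
            + (αt / Δy) * jumpV c00 c10 c01 c11 (i - 1) j β)
          - (GxV D11m D11p D12m D12p c00 c10 c01 c11 Δx Δy i j β
            + (αt / Δy) * jumpV c00 c10 c01 c11 i j β)))
      ≤ (D11M*Δx⁻¹/4 + (Real.sqrt 3*D12M + αt)*Δy⁻¹/2) *
        (cpV c00 c01 (i-1) j 0 + cpV c00 c01 (i-1) j 1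
          + cmV c10 c11 i j 0 + cmV c10 c11 i j 1) := by
    have key := flux_bound Δx⁻¹ Δy⁻¹ αt D11M D12M (Real.sqrt 3)
      (by positivity) (by positivity) (Real.sqrt_nonneg 3) hαt0 hD11M0 hD12M0 hαt'
      (D11m (i-1) j 0) (D11m (i-1) j 1) (D11p (i-1) j 0) (D11p (i-1) j 1)
      (D12m (i-1) j 0) (D12m (i-1) j 1) (D12p (i-1) j 0) (D12p (i-1) j 1)
      (D11m i j 0) (D11m i j 1) (D11p i j 0) (D11p i j 1)
      (D12m i j 0) (D12m i j 1) (D12p i j 0) (D12p i j 1)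
      (cpV c00 c01 (i-1-1) j 0) (cpV c00 c01 (i-1-1) j 1)
      (cmV c10 c11 (i-1) j 0) (cmV c10 c11 (i-1) j 1)
      (cpV c00 c01 (i-1) j 0) (cpV c00 c01 (i-1) j 1)
      (cmV c10 c11 i j 0) (cmV c10 c11 i j 1)
      (cpV c00 c01 i j 0) (cpV c00 c01 i j 1)
      (cmV c10 c11 (i+1) j 0) (cmV c10 c11 (i+1) j 1)
      hq0 hq1 hl0 hl1 hp0 hp1 hn0 hn1 hr0 hr1 hw0 hw1
      (hDL11 0).1 (hDL11 1).1 (hDL11 0).2 (hDL11 1).2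
      (hDR11 0).1 (hDR11 1).1 (hDR11 0).2 (hDR11 1).2
      (hDL12 0).1 (hDL12 1).1 (hDL12 0).2 (hDL12 1).2
      (hDR12 0).1 (hDR12 1).1 (hDR12 0).2 (hDR12 1).2
    refine le_trans (le_of_eq ?_) key
    simp only [GxV, jumpV, cxmV, cxpV, cymV, cypV, Fin.sum_univ_two, hidx]
    field_simp
    ring
  have hSc : cpV c00 c01 (i-1) j 0 + cpV c00 c01 (i-1) j 1
      + cmV c10 c11 i j 0 + cmV c10 c11 i j 1
      = c00 i j + c01 i j + c10 i j + c11 i j := by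
    simp only [cpV, cmV, hidx, ga_zero, ga_one, mu1, mu2]
    ring
  have h2 := mul_le_mul_of_nonneg_left hSle (by positivity : (0:ℝ) ≤ Δt/Δx)
  rw [hSc] at h2
  -- the CFL-type bound on the coefficient
  have hKB : Δt/Δx * (D11M*Δx⁻¹/4 + (Real.sqrt 3*D12M + αt)*Δy⁻¹/2)
      ≤ (D11M * (Δt / Δx ^ 2) + 2 * (αt + D12M) * (Δt / (Δx * Δy))) / 2 := by
    have e1 : Δt/Δx * (D11M*Δx⁻¹/4) = D11M * (Δt/Δx^2) / 4 := by
      field_simp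
    have e2 : Δt/Δx * ((Real.sqrt 3*D12M + αt)*Δy⁻¹/2)
        = (Real.sqrt 3*D12M + αt) * (Δt/(Δx*Δy)) / 2 := by
      field_simp
    have h3 : 0 ≤ Δt/Δx^2 := by positivity
    have h4 : 0 ≤ Δt/(Δx*Δy) := by positivity
    have h5 : Real.sqrt 3 * D12M ≤ 2 * D12M := by
      nlinarith [sqrt3_le_two, hD12M0]
    have key1 : D11M * (Δt/Δx^2) / 4 ≤ D11M * (Δt/Δx^2) / 2 := by
      nlinarith [mul_nonneg hD11M0 h3]
    have key2 : (Real.sqrt 3*D12M + αt) * (Δt/(Δx*Δy))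
        ≤ (2*(αt + D12M)) * (Δt/(Δx*Δy)) :=
      mul_le_mul_of_nonneg_right (by linarith) h4
    nlinarith [e1, e2, key1, key2]
  have hΦc : ∀ a b, a ≤ Nx → b ≤ Ny →
      Δt/Δx * (D11M*Δx⁻¹/4 + (Real.sqrt 3*D12M + αt)*Δy⁻¹/2) < Φ a b / 24 :=
    fun a b ha hb => lt_of_le_of_lt hKB (by linarith [hCFL a b ha hb])
  have f1 := mul_pos hcI.1 (sub_pos.mpr (hΦc (i-1) (j-1) (by omega) (by omega)))
  have f2 := mul_pos hcI.2.1 (sub_pos.mpr (hΦc i (j-1) hiNx (by omega)))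
  have f3 := mul_pos hcI.2.2.1 (sub_pos.mpr (hΦc (i-1) j (by omega) hjNy))
  have f4 := mul_pos hcI.2.2.2 (sub_pos.mpr (hΦc i j hiNx hjNy))
  simp only [Hdx, rbar]
  linarith [h2, f1, f2, f3, f4]

end DG2D
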